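/- Let G be a connected graph of order n ≥ 2 with minimum degree δ(G) ≥ (n-1)/2. Then prc(G) = χ'(G). -/

import Mathlib

open SimpleGraph

variable {V : Type*}

/-- A walk is rainbow under edge colouring `c` if its edges receive pairwise distinct colours. -/
def SimpleGraph.Walk.IsRainbow {G : SimpleGraph V} {u v : V} (c : Sym2 V → ℕ) (p : G.Walk u v) :
    Prop :=
  (p.edges.map c).Nodup

/-- `G` is rainbow connected under the edge colouring `c`: any two vertices are joined by a
rainbow path. -/
def SimpleGraph.RainbowConnected (G : SimpleGraph V) (c : Sym2 V → ℕ) : Prop :=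
  ∀ u v : V, ∃ p : G.Walk u v, p.IsPath ∧ p.IsRainbow c

/-- `c` is a proper edge colouring of `G`: adjacent edges receive distinct colours. -/
def SimpleGraph.IsProperEdgeColoring (G : SimpleGraph V) (c : Sym2 V → ℕ) : Prop :=
  ∀ ⦃u v w : V⦄, G.Adj u v → G.Adj u w → v ≠ w → c s(u, v) ≠ c s(u, w)

/-- The colouring `c` uses at most `k` colours on the edges of `G`. -/
def SimpleGraph.ColorsLE (G : SimpleGraph V) (c : Sym2 V → ℕ) (k : ℕ) : Prop :=
  ∀ e ∈ G.edgeSet, c e < k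

/-- The rainbow connection number `rc(G)`. -/
noncomputable def SimpleGraph.rcNumber (G : SimpleGraph V) : ℕ :=
  sInf {k | ∃ c : Sym2 V → ℕ, G.ColorsLE c k ∧ G.RainbowConnected c}

/-- The proper rainbow connection number `prc(G)`. -/
noncomputable def SimpleGraph.prcNumber (G : SimpleGraph V) : ℕ :=
  sInf {k | ∃ c : Sym2 V → ℕ, G.ColorsLE c k ∧ G.IsProperEdgeColoring c ∧ G.RainbowConnected c}

/-- The chromatic index `χ'(G)`. -/
noncomputable def SimpleGraph.chromaticIndex (G : SimpleGraph V) : ℕ :=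
  sInf {k | ∃ c : Sym2 V → ℕ, G.ColorsLE c k ∧ G.IsProperEdgeColoring c}

/-- Under the degree condition, any two distinct non-adjacent vertices have a common
neighbour. -/
lemma common_neighbor {V : Type*} [Fintype V] [DecidableEq V] (G : SimpleGraph V)
    [DecidableRel G.Adj] (hn : 2 ≤ Fintype.card V) (hδ : Fintype.card V - 1 ≤ 2 * G.minDegree)
    {u v : V} (huv : u ≠ v) (hadj : ¬ G.Adj u v) :
    ∃ w, G.Adj u w ∧ G.Adj v w := by
  classical
  have hsub : ∀ x ∈ G.neighborFinset u ∪ G.neighborFinset v,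
      x ∈ (Finset.univ \ {u, v} : Finset V) := by
    intro x hx
    simp only [Finset.mem_union, mem_neighborFinset] at hx
    simp only [Finset.mem_sdiff, Finset.mem_univ, Finset.mem_insert, Finset.mem_singleton,
      true_and]
    push_neg
    rcases hx with h | h
    · exact ⟨fun e => G.loopless.irrefl u (e ▸ h), fun e => hadj (e ▸ h)⟩
    · exact ⟨fun e => hadj (e ▸ h.symm), fun e => G.loopless.irrefl v (e ▸ h)⟩
  by_contra hno
  push_neg at hno
  have hdisj : Disjoint (G.neighborFinset u) (G.neighborFinset v) := by
    rw [Finset.disjoint_left]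
    intro w hw hw'
    exact hno w (by rwa [mem_neighborFinset] at hw) (by rwa [mem_neighborFinset] at hw')
  have hcard : (G.neighborFinset u).card + (G.neighborFinset v).card
      ≤ (Finset.univ \ {u, v} : Finset V).card := by
    rw [← Finset.card_union_of_disjoint hdisj]
    exact Finset.card_le_card hsub
  have h2 : ({u, v} : Finset V).card = 2 := by
    rw [Finset.card_insert_of_notMem (by simpa using huv), Finset.card_singleton]
  have hsd : (Finset.univ \ {u, v} : Finset V).card = Fintype.card V - 2 := by
    rw [Finset.card_sdiff_of_subset (Finset.subset_univ _), h2, Finset.card_univ]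
  have hdu : G.minDegree ≤ G.degree u := G.minDegree_le_degree u
  have hdv : G.minDegree ≤ G.degree v := G.minDegree_le_degree v
  rw [card_neighborFinset_eq_degree, card_neighborFinset_eq_degree, hsd] at hcard
  omega

lemma proper_rainbow {V : Type*} [Fintype V] [DecidableEq V] (G : SimpleGraph V)
    [DecidableRel G.Adj] (hn : 2 ≤ Fintype.card V) (hδ : Fintype.card V - 1 ≤ 2 * G.minDegree)
    {c : Sym2 V → ℕ} (hc : G.IsProperEdgeColoring c) : G.RainbowConnected c := by
  intro u v
  by_cases huv : u = v
  · subst huv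
    exact ⟨Walk.nil, Walk.IsPath.nil, by simp [Walk.IsRainbow]⟩
  by_cases hadj : G.Adj u v
  · refine ⟨Walk.cons hadj Walk.nil, ?_, ?_⟩
    · simp [Walk.isPath_def, huv]
    · simp [Walk.IsRainbow]
  · obtain ⟨w, hw1, hw2⟩ := common_neighbor G hn hδ huv hadj
    refine ⟨Walk.cons hw1 (Walk.cons hw2.symm Walk.nil), ?_, ?_⟩
    · have h1 : u ≠ w := fun e => G.loopless.irrefl u (e ▸ hw1)
      have h2 : w ≠ v := fun e => G.loopless.irrefl v (e ▸ hw2)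
      simp [Walk.isPath_def, huv, h1, h2]
    · have hne : c s(u, w) ≠ c s(w, v) := by
        rw [Sym2.eq_swap]; exact hc hw1.symm hw2.symm huv
      simp [Walk.IsRainbow, hne]

theorem stmt12 {V : Type*} [Fintype V] [DecidableEq V] (G : SimpleGraph V) [DecidableRel G.Adj]
    (hconn : G.Connected) (hn : 2 ≤ Fintype.card V)
    (hδ : Fintype.card V - 1 ≤ 2 * G.minDegree) :
    G.prcNumber = G.chromaticIndex := by
  unfold SimpleGraph.prcNumber SimpleGraph.chromaticIndex
  congr 1
  ext k
  constructor
  · rintro ⟨c, h1, h2, _⟩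
    exact ⟨c, h1, h2⟩
  · rintro ⟨c, h1, h2⟩
    exact ⟨c, h1, h2, proper_rainbow G hn hδ h2⟩
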